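/- Let s ∈ {0,1}^{n'} with 1 ≤ n' ≤ n, let j ∈ [n'], and let s' = 1^j 2^{n-j}, where 2 is a character distinct from 0 and 1. If k is the number of 1's among the first j characters of s, then the Levenshtein edit distance d_L(s, s') = n - k. -/

import Mathlib

/-- Costs of the edit operations (as in the former `Mathlib.Data.List.EditDistance.Defs`). -/
structure Levenshtein.Cost (α β δ : Type*) where
  delete : α → δ
  insert : β → δ
  substitute : α → β → δ

/-- Unit costs: deletion and insertion cost 1, substitution costs 0 or 1. -/
def Levenshtein.defaultCost {α : Type*} [DecidableEq α] : Levenshtein.Cost α α ℕ where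
  delete _ := 1
  insert _ := 1
  substitute a b := if a = b then 0 else 1

/-- The Levenshtein distance, given by the recursion the former Mathlib definition satisfied. -/
def levenshtein {α β δ : Type*} [AddZeroClass δ] [Min δ] (C : Levenshtein.Cost α β δ) :
    List α → List β → δ
  | [], [] => 0
  | x :: xs, [] => C.delete x + levenshtein C xs []
  | [], y :: ys => levenshtein C [] ys + C.insert y
  | x :: xs, y :: ys => min (C.delete x + levenshtein C xs (y :: ys))
      (min (C.insert y + levenshtein C (x :: xs) ys) (C.substitute x y + levenshtein C xs ys))

/-- The Levenshtein edit distance with unit costs, over alphabet `ℕ`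
(which contains the extended alphabet `{0,1,2}`). -/
def editDist (x y : List ℕ) : ℕ := levenshtein Levenshtein.defaultCost x y

@[simp] theorem levenshtein_nil_nil {α β δ : Type*} [AddZeroClass δ] [Min δ]
    (C : Levenshtein.Cost α β δ) : levenshtein C [] [] = 0 := by rw [levenshtein]

@[simp] theorem levenshtein_nil_cons {α β δ : Type*} [AddZeroClass δ] [Min δ]
    (C : Levenshtein.Cost α β δ) (y : β) (ys : List β) :
    levenshtein C [] (y :: ys) = levenshtein C [] ys + C.insert y := by rw [levenshtein]

@[simp] theorem levenshtein_cons_nil {α β δ : Type*} [AddZeroClass δ] [Min δ]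
    (C : Levenshtein.Cost α β δ) (x : α) (xs : List α) :
    levenshtein C (x :: xs) [] = C.delete x + levenshtein C xs [] := by rw [levenshtein]

theorem levenshtein_cons_cons {α β δ : Type*} [AddZeroClass δ] [Min δ]
    (C : Levenshtein.Cost α β δ) (x : α) (xs : List α) (y : β) (ys : List β) :
    levenshtein C (x :: xs) (y :: ys) = min (C.delete x + levenshtein C xs (y :: ys))
      (min (C.insert y + levenshtein C (x :: xs) ys) (C.substitute x y + levenshtein C xs ys)) := by
  rw [levenshtein]

@[simp] theorem Levenshtein.defaultCost_delete {α : Type*} [DecidableEq α] (a : α) :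
    (Levenshtein.defaultCost : Levenshtein.Cost α α ℕ).delete a = 1 := rfl

@[simp] theorem Levenshtein.defaultCost_insert {α : Type*} [DecidableEq α] (a : α) :
    (Levenshtein.defaultCost : Levenshtein.Cost α α ℕ).insert a = 1 := rfl

@[simp] theorem Levenshtein.defaultCost_substitute {α : Type*} [DecidableEq α] (a b : α) :
    (Levenshtein.defaultCost : Levenshtein.Cost α α ℕ).substitute a b = if a = b then 0 else 1 := rfl

lemma editDist_nil (t : List ℕ) : editDist [] t = t.length := by
  induction t with
  | nil => simp [editDist]
  | cons a t ih => simp [editDist] at ih ⊢; omega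

lemma count_take_succ_le (s : List ℕ) (n : ℕ) :
    (s.take (n+1)).count 1 ≤ (s.take n).count 1 + 1 := by
  rw [List.take_succ, List.count_append]
  have h1 : List.count 1 s[n]?.toList ≤ s[n]?.toList.length := List.count_le_length
  have h2 : s[n]?.toList.length ≤ 1 := by cases s[n]? <;> simp
  omega

lemma count_take_mono (s : List ℕ) (n : ℕ) :
    (s.take n).count 1 ≤ (s.take (n+1)).count 1 := by
  rw [List.take_succ, List.count_append]; omega

lemma lev_lb : ∀ N s, (∀ c ∈ s, c = 0 ∨ c = 1) → ∀ j m, s.length + j + m ≤ N →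
    j + m ≤ (s.take j).count 1 + editDist s (List.replicate j 1 ++ List.replicate m 2) := by
  intro N
  induction N with
  | zero =>
    intro s hbin j m hN
    have hs : s = [] := by cases s <;> simp_all
    subst hs
    simp_all [editDist_nil]
  | succ N IH =>
    intro s hbin j m hN
    match s, j, m with
    | [], j, m => simp [editDist_nil]
    | a :: s, 0, 0 => simp
    | a :: s, 0, m+1 =>
      have hbin' : ∀ c ∈ s, c = 0 ∨ c = 1 := fun c hc => hbin c (List.mem_cons_of_mem _ hc)
      have h1 := IH s hbin' 0 (m+1) (by simp at hN ⊢; omega)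
      have h2 := IH (a :: s) hbin 0 m (by simp at hN ⊢; omega)
      have h3 := IH s hbin' 0 m (by simp at hN ⊢; omega)
      have ha : a ≠ 2 := by rcases hbin a (by simp) with h | h <;> omega
      simp only [List.replicate_succ, List.replicate_zero, List.nil_append, List.take_zero,
        List.count_nil, editDist, levenshtein_cons_cons, Nat.zero_add,
        Levenshtein.defaultCost_delete, Levenshtein.defaultCost_insert,
        Levenshtein.defaultCost_substitute, if_neg ha] at *
      omega
    | a :: s, j+1, m =>
      have hbin' : ∀ c ∈ s, c = 0 ∨ c = 1 := fun c hc => hbin c (List.mem_cons_of_mem _ hc)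
      have h1 := IH s hbin' (j+1) m (by simp at hN ⊢; omega)
      have h2 := IH (a :: s) hbin j m (by simp at hN ⊢; omega)
      have h3 := IH s hbin' j m (by simp at hN ⊢; omega)
      have h4 := count_take_succ_le s j
      have h5 := count_take_mono (a :: s) j
      simp only [List.replicate_succ, List.cons_append, editDist, levenshtein_cons_cons,
        List.take_succ_cons, List.count_cons, beq_iff_eq,
        Levenshtein.defaultCost_delete, Levenshtein.defaultCost_insert,
        Levenshtein.defaultCost_substitute] at *
      rcases hbin a (by simp) with rfl | rfl <;> simp at * <;> omega

lemma lev_ub : ∀ s, (∀ c ∈ s, c = 0 ∨ c = 1) → ∀ j m, j ≤ s.length → s.length ≤ j + m →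
    editDist s (List.replicate j 1 ++ List.replicate m 2) + (s.take j).count 1 ≤ j + m := by
  intro s hbin
  induction s with
  | nil =>
    intro j m hj hlen
    have : j = 0 := by simpa using hj
    subst this
    simp [editDist_nil]
  | cons a s ih =>
    have hbin' : ∀ c ∈ s, c = 0 ∨ c = 1 := fun c hc => hbin c (List.mem_cons_of_mem _ hc)
    intro j m hj hlen
    match j, m with
    | 0, m+1 =>
      have h1 := ih hbin' 0 m (by omega) (by simp at hlen ⊢; omega)
      have ha : a ≠ 2 := by rcases hbin a (by simp) with h | h <;> omega
      simp only [List.replicate_succ, List.replicate_zero, List.nil_append, List.take_zero,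
        List.count_nil, editDist, levenshtein_cons_cons, Nat.add_zero, Nat.zero_add,
        Levenshtein.defaultCost_delete, Levenshtein.defaultCost_insert,
        Levenshtein.defaultCost_substitute, if_neg ha] at *
      omega
    | j+1, m =>
      have h1 := ih hbin' j m (by simp at hj; omega) (by simp at hlen; omega)
      simp only [List.replicate_succ, List.cons_append, editDist, levenshtein_cons_cons,
        List.take_succ_cons, List.count_cons, beq_iff_eq,
        Levenshtein.defaultCost_delete, Levenshtein.defaultCost_insert,
        Levenshtein.defaultCost_substitute] at *
      rcases hbin a (by simp) with rfl | rfl <;> simp at * <;> omega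

/-- For a binary sequence `s` of length `n'` with `1 ≤ n' ≤ n`, `j ∈ [n']`,
and `s' = 1^j 2^(n-j)`, if `k` is the number of `1`'s among the first `j` characters of `s`,
then `d_L(s, s') = n - k`. -/
theorem edit_dist_to_ones_twos_query
    (n n' : ℕ) (hn'1 : 1 ≤ n') (hn'n : n' ≤ n)
    (s : List ℕ) (hlen : s.length = n')
    (hbin : ∀ c ∈ s, c = 0 ∨ c = 1)
    (j : ℕ) (hj1 : 1 ≤ j) (hjn' : j ≤ n')
    (k : ℕ) (hk : k = (s.take j).count 1) :
    editDist s (List.replicate j 1 ++ List.replicate (n - j) 2) = n - k := by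
  have hlb := lev_lb (s.length + j + (n - j)) s hbin j (n - j) le_rfl
  have hub := lev_ub s hbin j (n - j) (by omega) (by omega)
  omega
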